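/- arXiv:2302.07186 — 2 statements merged into one kernel-verified Lean document; each statement's English description precedes it below -/
import Mathlib

section
/- Let 𝒳 be a separable metrizable space with its Borel σ-algebra. Every stochastic process on 𝒳 satisfying condition C4 also satisfies condition C2. -/
open MeasureTheory Filter Set Topology

noncomputable section

variable {Ω : Type*} [MeasurableSpace Ω] {𝒳 : Type*} [MeasurableSpace 𝒳]

/-- Average number of times `t ∈ 𝒯 ω`, `1 ≤ t ≤ T`, with `X t ω ∈ A`, divided by `T`. -/
def avgVisit (X : ℕ → Ω → 𝒳) (𝒯 : Ω → Set ℕ) (A : Set 𝒳) (T : ℕ) (ω : Ω) : ℝ :=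
  (T : ℝ)⁻¹ * ∑ t ∈ Finset.Icc 1 T,
    ({s : ℕ | s ∈ 𝒯 ω ∧ X s ω ∈ A}.indicator (fun _ => (1 : ℝ)) t)

/-- Limit submeasure `μ̂` of the extended process `(X_t)_{t ∈ 𝒯}`. -/
def limitSubmeasure (X : ℕ → Ω → 𝒳) (𝒯 : Ω → Set ℕ) (A : Set 𝒳) (ω : Ω) : ℝ :=
  Filter.limsup (fun T => avgVisit X 𝒯 A T ω) Filter.atTop

/-- Condition C1 for the extended process `(X_t)_{t ∈ 𝒯}`. -/
def SatisfiesC1 (P : Measure Ω) (X : ℕ → Ω → 𝒳) (𝒯 : Ω → Set ℕ) : Prop :=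
  ∀ A : ℕ → Set 𝒳, (∀ k, MeasurableSet (A k)) → Antitone A → (⋂ k, A k) = ∅ →
    Filter.Tendsto (fun k => ∫ ω, limitSubmeasure X 𝒯 (A k) ω ∂P) Filter.atTop (nhds 0)

/-- `T_i^k = ⌊2^u (1 + v·2^{-i})⌋` where `k = u·2^i + v`, `0 ≤ v < 2^i`. -/
def timeGrid (i k : ℕ) : ℕ :=
  ⌊(2 : ℝ) ^ (k / 2 ^ i) * (1 + ((k % 2 ^ i : ℕ) : ℝ) / (2 ^ i : ℝ))⌋₊

/-- `𝒯^i`: times of first appearance of the instance within its period at scale `i`. -/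
def scaleTimes (X : ℕ → Ω → 𝒳) (i : ℕ) (ω : Ω) : Set ℕ :=
  {t | 1 ≤ t ∧ ∀ k, timeGrid i k ≤ t → t < timeGrid i (k + 1) →
    ∀ t', timeGrid i k ≤ t' → t' < t → X t' ω ≠ X t ω}

/-- Condition C4. -/
def SatisfiesC4 (P : Measure Ω) (X : ℕ → Ω → 𝒳) : Prop :=
  ∀ A : ℕ → Set 𝒳, (∀ i, MeasurableSet (A i)) → Pairwise (Function.onFun Disjoint A) →
    Filter.Tendsto (fun i => ∫ ω, limitSubmeasure X (scaleTimes X i) (A i) ω ∂P)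
      Filter.atTop (nhds 0)

/-- Supremum over `T ≥ T₀` of the average visit counts. -/
def supAvgVisit (X : ℕ → Ω → 𝒳) (𝒯 : Ω → Set ℕ) (A : Set 𝒳) (T₀ : ℕ) (ω : Ω) : ℝ :=
  ⨆ T : {T : ℕ // T₀ ≤ T}, avgVisit X 𝒯 A T ω

/-- Number of sets `A k` visited by the process up to time `T`. -/
def distinctSetCount (X : ℕ → Ω → 𝒳) (A : ℕ → Set 𝒳) (T : ℕ) (ω : Ω) : ℕ :=
  Set.ncard {k : ℕ | ∃ t, 1 ≤ t ∧ t ≤ T ∧ X t ω ∈ A k}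

/-- Condition C2. -/
def SatisfiesC2 (P : Measure Ω) (X : ℕ → Ω → 𝒳) : Prop :=
  ∀ A : ℕ → Set 𝒳, (∀ k, MeasurableSet (A k)) → Pairwise (Function.onFun Disjoint A) →
    ∀ᵐ ω ∂P, Filter.Tendsto (fun T => (distinctSetCount X A T ω : ℝ) / T)
      Filter.atTop (nhds 0)

/-- Condition C5. -/
def SatisfiesC5 (P : Measure Ω) (X : ℕ → Ω → 𝒳) : Prop :=
  ∃ Ti : ℕ → ℕ, Monotone Ti ∧
    SatisfiesC1 P X (fun ω => ⋃ i, scaleTimes X i ω ∩ {t : ℕ | Ti i ≤ t})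

/-- `N_t(x) = Σ_{1 ≤ s ≤ t} 1[X_s = x]`, the occurrence count. -/
def dupCount (X : ℕ → Ω → 𝒳) (t : ℕ) (x : 𝒳) (ω : Ω) : ℕ :=
  Set.ncard {s : ℕ | 1 ≤ s ∧ s ≤ t ∧ X s ω = x}

/-- Condition C8. -/
def SatisfiesC8 (P : Measure Ω) (X : ℕ → Ω → 𝒳) : Prop :=
  ∃ Ψ : ℕ → ℕ, Monotone Ψ ∧ Filter.Tendsto Ψ Filter.atTop Filter.atTop ∧
    ∀ A : ℕ → Set 𝒳, (∀ i, MeasurableSet (A i)) → Antitone A → (⋂ i, A i) = ∅ →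
      Filter.Tendsto (fun i => ∫ ω, Filter.limsup (fun T : ℕ => (T : ℝ)⁻¹ *
          ∑ t ∈ Finset.Icc 1 T,
            ({s : ℕ | X s ω ∈ A i ∧ dupCount X s (X s ω) ω ≤ Ψ T}.indicator
              (fun _ => (1 : ℝ)) t)) Filter.atTop ∂P)
        Filter.atTop (nhds 0)



section AuxStmt3
set_option linter.unusedSectionVars false
set_option maxHeartbeats 1000000
open scoped ENNReal


lemma timeGrid_pos (i k : ℕ) : 1 ≤ timeGrid i k := by
  rw [timeGrid, Nat.le_floor_iff]
  · push_cast
    have h1 : (1:ℝ) ≤ 2 ^ (k / 2 ^ i) := one_le_pow₀ one_le_two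
    have h2 : (0:ℝ) ≤ ((k % 2 ^ i : ℕ) : ℝ) / (2 ^ i : ℝ) := by positivity
    nlinarith
  · positivity

lemma mem_scaleTimes_of_new {X : ℕ → Ω → 𝒳} {i : ℕ} {ω : Ω} {t : ℕ} (ht : 1 ≤ t)
    (h : ∀ t', 1 ≤ t' → t' < t → X t' ω ≠ X t ω) : t ∈ scaleTimes X i ω :=
  ⟨ht, fun k hk1 _ t' ht1' ht2' => h t' (le_trans (timeGrid_pos i k) ht1') ht2'⟩

lemma avgVisit_nonneg (X : ℕ → Ω → 𝒳) (𝒯 : Ω → Set ℕ) (A : Set 𝒳) (T : ℕ) (ω : Ω) :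
    0 ≤ avgVisit X 𝒯 A T ω := by
  apply mul_nonneg (by positivity)
  exact Finset.sum_nonneg fun t _ => Set.indicator_nonneg (fun _ _ => zero_le_one) t

lemma avgVisit_le_one (X : ℕ → Ω → 𝒳) (𝒯 : Ω → Set ℕ) (A : Set 𝒳) (T : ℕ) (ω : Ω) :
    avgVisit X 𝒯 A T ω ≤ 1 := by
  rcases Nat.eq_zero_or_pos T with h | h
  · simp [avgVisit, h]
  · have hsum : ∑ t ∈ Finset.Icc 1 T,
        ({s : ℕ | s ∈ 𝒯 ω ∧ X s ω ∈ A}.indicator (fun _ => (1 : ℝ)) t) ≤ (T : ℝ) := by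
      calc ∑ t ∈ Finset.Icc 1 T, ({s : ℕ | s ∈ 𝒯 ω ∧ X s ω ∈ A}.indicator (fun _ => (1 : ℝ)) t)
          ≤ ∑ _t ∈ Finset.Icc 1 T, (1:ℝ) :=
            Finset.sum_le_sum fun t _ => Set.indicator_le_self' (fun _ _ => zero_le_one) t
        _ = (T : ℝ) := by simp [Nat.Icc_eq_range']
    rw [avgVisit, inv_mul_le_iff₀ (by exact_mod_cast h : (0:ℝ) < (T:ℝ))]
    calc ∑ t ∈ Finset.Icc 1 T, ({s : ℕ | s ∈ 𝒯 ω ∧ X s ω ∈ A}.indicator (fun _ => (1 : ℝ)) t)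
        ≤ (T:ℝ) := hsum
      _ ≤ (T:ℝ) * 1 := by linarith

lemma avgVisit_ge_card {X : ℕ → Ω → 𝒳} {𝒯 : Ω → Set ℕ} {A : Set 𝒳} {T : ℕ} {ω : Ω}
    (W : Finset ℕ) (hW : W ⊆ Finset.Icc 1 T)
    (hmem : ∀ t ∈ W, t ∈ 𝒯 ω ∧ X t ω ∈ A) :
    (W.card : ℝ) / T ≤ avgVisit X 𝒯 A T ω := by
  rcases Nat.eq_zero_or_pos T with h | h
  · subst h
    simp only [Nat.cast_zero, div_zero]
    exact avgVisit_nonneg X 𝒯 A 0 ω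
  · have hsum : (W.card : ℝ) ≤ ∑ t ∈ Finset.Icc 1 T,
        ({s : ℕ | s ∈ 𝒯 ω ∧ X s ω ∈ A}.indicator (fun _ => (1 : ℝ)) t) := by
      have heq : ∀ t ∈ W, ({s : ℕ | s ∈ 𝒯 ω ∧ X s ω ∈ A}.indicator (fun _ => (1 : ℝ)) t) = 1 :=
        fun t ht => Set.indicator_of_mem (show t ∈ {s : ℕ | s ∈ 𝒯 ω ∧ X s ω ∈ A} from hmem t ht) _
      have : (W.card : ℝ) = ∑ t ∈ W,
          ({s : ℕ | s ∈ 𝒯 ω ∧ X s ω ∈ A}.indicator (fun _ => (1 : ℝ)) t) := by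
        rw [Finset.sum_congr rfl heq]; simp
      rw [this]
      exact Finset.sum_le_sum_of_subset_of_nonneg hW
        (fun t _ _ => Set.indicator_nonneg (fun _ _ => zero_le_one) t)
    rw [avgVisit, div_eq_inv_mul]
    exact mul_le_mul_of_nonneg_left hsum (by positivity)

section AuxMeas1
variable [TopologicalSpace 𝒳] [TopologicalSpace.SeparableSpace 𝒳]
  [TopologicalSpace.MetrizableSpace 𝒳] [BorelSpace 𝒳]
  {X : ℕ → Ω → 𝒳}

lemma secondCountable_of_sep_met :
    SecondCountableTopology 𝒳 := by
  letI := TopologicalSpace.pseudoMetrizableSpacePseudoMetric 𝒳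
  exact UniformSpace.secondCountable_of_separable 𝒳

lemma measurableSet_mem_scaleTimes (hX : ∀ t, Measurable (X t)) (i t : ℕ) :
    MeasurableSet {ω | t ∈ scaleTimes X i ω} := by
  haveI := secondCountable_of_sep_met (𝒳 := 𝒳)
  have heq : {ω | t ∈ scaleTimes X i ω} =
      {ω : Ω | 1 ≤ t} ∩ ⋂ (k : ℕ) (_ : timeGrid i k ≤ t) (_ : t < timeGrid i (k+1))
        (t' : ℕ) (_ : timeGrid i k ≤ t') (_ : t' < t), {ω | X t' ω = X t ω}ᶜ := by
    ext ω
    simp only [scaleTimes, Set.mem_setOf_eq, Set.mem_inter_iff, Set.mem_iInter,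
      Set.mem_compl_iff]
  rw [heq]
  apply MeasurableSet.inter
  · exact MeasurableSet.const _
  · refine MeasurableSet.iInter fun k => ?_
    refine MeasurableSet.iInter fun _ => ?_
    refine MeasurableSet.iInter fun _ => ?_
    refine MeasurableSet.iInter fun t' => ?_
    refine MeasurableSet.iInter fun _ => ?_
    refine MeasurableSet.iInter fun _ => ?_
    exact ((hX t').stronglyMeasurable.measurableSet_eq_fun (hX t).stronglyMeasurable).compl

lemma measurable_avgVisit (hX : ∀ t, Measurable (X t)) {A : Set 𝒳} (hA : MeasurableSet A)
    (i T : ℕ) : Measurable (avgVisit X (scaleTimes X i) A T) := by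
  apply Measurable.const_mul
  apply Finset.measurable_sum
  intro t _
  have : (fun ω => ({s : ℕ | s ∈ scaleTimes X i ω ∧ X s ω ∈ A}.indicator
      (fun _ => (1 : ℝ)) t)) =
      ({ω : Ω | t ∈ scaleTimes X i ω ∧ X t ω ∈ A}.indicator (fun _ => (1 : ℝ))) := by
    ext ω
    classical
    rw [Set.indicator_apply, Set.indicator_apply]
    simp only [Set.mem_setOf_eq]
  rw [this]
  exact (measurable_const.indicator
    ((measurableSet_mem_scaleTimes hX i t).inter ((hX t) hA)))

lemma measurable_limitSubmeasure (hX : ∀ t, Measurable (X t)) {A : Set 𝒳}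
    (hA : MeasurableSet A) (i : ℕ) :
    Measurable (limitSubmeasure X (scaleTimes X i) A) :=
  Measurable.limsup (fun T => measurable_avgVisit hX hA i T)


end AuxMeas1

lemma limitSubmeasure_nonneg (X : ℕ → Ω → 𝒳) (𝒯 : Ω → Set ℕ) (A : Set 𝒳) (ω : Ω) :
    0 ≤ limitSubmeasure X 𝒯 A ω :=
  le_limsup_of_frequently_le (Frequently.of_forall fun T => avgVisit_nonneg X 𝒯 A T ω)
    (isBoundedUnder_of ⟨1, fun T => avgVisit_le_one X 𝒯 A T ω⟩)

lemma limitSubmeasure_le_one (X : ℕ → Ω → 𝒳) (𝒯 : Ω → Set ℕ) (A : Set 𝒳) (ω : Ω) :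
    limitSubmeasure X 𝒯 A ω ≤ 1 :=
  limsup_le_of_le
    (IsCoboundedUnder.of_frequently_ge
      (Frequently.of_forall fun T => avgVisit_nonneg X 𝒯 A T ω))
    (Eventually.of_forall fun T => avgVisit_le_one X 𝒯 A T ω)

lemma limitSubmeasure_ge_of_frequently {X : ℕ → Ω → 𝒳} {𝒯 : Ω → Set ℕ} {A : Set 𝒳} {ω : Ω}
    {c : ℝ} (h : ∀ N : ℕ, ∃ T ≥ N, c ≤ avgVisit X 𝒯 A T ω) :
    c ≤ limitSubmeasure X 𝒯 A ω :=
  le_limsup_of_frequently_le (frequently_atTop.mpr h)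
    (isBoundedUnder_of ⟨1, fun T => avgVisit_le_one X 𝒯 A T ω⟩)

lemma integrable_limitSubmeasure {P : Measure Ω} [IsProbabilityMeasure P]
    {X : ℕ → Ω → 𝒳} {𝒯 : Ω → Set ℕ} {A : Set 𝒳}
    (hm : Measurable (limitSubmeasure X 𝒯 A)) :
    Integrable (limitSubmeasure X 𝒯 A) P := by
  refine Integrable.mono' (integrable_const 1) hm.aestronglyMeasurable ?_
  refine Eventually.of_forall fun ω => ?_
  rw [Real.norm_eq_abs, abs_le]
  exact ⟨by linarith [limitSubmeasure_nonneg X 𝒯 A ω], limitSubmeasure_le_one X 𝒯 A ω⟩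

lemma integral_ge_of_event {P : Measure Ω} [IsProbabilityMeasure P] {f : Ω → ℝ}
    (hfi : Integrable f P) (h0 : ∀ ω, 0 ≤ f ω)
    {G : Set Ω} (hG : MeasurableSet G) {c : ℝ} (hc : 0 ≤ c) (hfc : ∀ ω ∈ G, c ≤ f ω) :
    c * (P G).toReal ≤ ∫ ω, f ω ∂P := by
  have h1 : c * (P G).toReal = ∫ _ in G, c ∂P := by
    rw [setIntegral_const]; ring_nf; rfl
  rw [h1]
  calc ∫ _ in G, c ∂P ≤ ∫ ω in G, f ω ∂P :=
        setIntegral_mono_on (integrableOn_const (measure_ne_top P G))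
          hfi.integrableOn hG (fun ω hω => hfc ω hω)
    _ ≤ ∫ ω, f ω ∂P := setIntegral_le_integral hfi (Eventually.of_forall h0)

/-- The event that cell `k` has been visited by time `T`. -/
def hitEv (X : ℕ → Ω → 𝒳) (B : ℕ → Set 𝒳) (T k : ℕ) : Set Ω :=
  {ω | ∃ t, 1 ≤ t ∧ t ≤ T ∧ X t ω ∈ B k}

/-- The event that at least `c` distinct cells have been visited by time `T`. -/
def cntEv (X : ℕ → Ω → 𝒳) (B : ℕ → Set 𝒳) (T : ℕ) (c : ℝ) : Set Ω :=
  {ω | ∃ F : Finset ℕ, c ≤ (F.card : ℝ) ∧ ∀ k ∈ F, ω ∈ hitEv X B T k}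

/-- Union of a tail of the cells. -/
def tailUn (B : ℕ → Set 𝒳) (N : ℕ) : Set 𝒳 := ⋃ k, ⋃ (_ : N ≤ k), B k

/-- The event that some cell with index `> M` has been visited by time `T`. -/
def tfail (X : ℕ → Ω → 𝒳) (B : ℕ → Set 𝒳) (T M : ℕ) : Set Ω :=
  ⋃ t, ⋃ (_ : 1 ≤ t ∧ t ≤ T), X t ⁻¹' tailUn B (M + 1)

/-- The event that `ε T` cells have been seen at some time `T ∈ (a, b]`. -/
def winEv (X : ℕ → Ω → 𝒳) (B : ℕ → Set 𝒳) (ε : ℝ) (a b : ℕ) : Set Ω :=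
  ⋃ T, ⋃ (_ : a < T ∧ T ≤ b), cntEv X B T (ε * T)

/-- The event that for every `n` there is `T ≥ n` with `ε T` cells seen by time `T`. -/
def infEv (X : ℕ → Ω → 𝒳) (B : ℕ → Set 𝒳) (ε : ℝ) : Set Ω :=
  ⋂ n, ⋃ T, ⋃ (_ : n ≤ T), cntEv X B T (ε * T)

section MeasEv
variable {X : ℕ → Ω → 𝒳} {B : ℕ → Set 𝒳}
  (hX : ∀ t, Measurable (X t)) (hB : ∀ k, MeasurableSet (B k))
include hX hB

lemma measurableSet_hitEv (T k : ℕ) : MeasurableSet (hitEv X B T k) := by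
  have : hitEv X B T k = ⋃ t, ⋃ (_ : 1 ≤ t ∧ t ≤ T), X t ⁻¹' B k := by
    ext ω; simp [hitEv]; tauto
  rw [this]
  exact MeasurableSet.iUnion fun t => MeasurableSet.iUnion fun _ => (hX t) (hB k)

lemma measurableSet_cntEv (T : ℕ) (c : ℝ) : MeasurableSet (cntEv X B T c) := by
  have : cntEv X B T c = ⋃ F : Finset ℕ, ⋃ (_ : c ≤ (F.card : ℝ)),
      ⋂ k ∈ F, hitEv X B T k := by
    ext ω; simp [cntEv]
  rw [this]
  exact MeasurableSet.iUnion fun F => MeasurableSet.iUnion fun _ =>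
    MeasurableSet.biInter F.countable_toSet fun k _ => measurableSet_hitEv hX hB T k

lemma measurableSet_tfail (T M : ℕ) : MeasurableSet (tfail X B T M) :=
  MeasurableSet.iUnion fun t => MeasurableSet.iUnion fun _ =>
    (hX t) (MeasurableSet.iUnion fun k => MeasurableSet.iUnion fun _ => hB k)

lemma measurableSet_winEv (ε : ℝ) (a b : ℕ) : MeasurableSet (winEv X B ε a b) :=
  MeasurableSet.iUnion fun T => MeasurableSet.iUnion fun _ => measurableSet_cntEv hX hB T _

lemma measurableSet_infEv (ε : ℝ) : MeasurableSet (infEv X B ε) :=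
  MeasurableSet.iInter fun n => MeasurableSet.iUnion fun T =>
    MeasurableSet.iUnion fun _ => measurableSet_cntEv hX hB T _

end MeasEv

lemma hitSet_finite {X : ℕ → Ω → 𝒳} {B : ℕ → Set 𝒳} (hdisj : Pairwise (Function.onFun Disjoint B))
    (T : ℕ) (ω : Ω) : {k : ℕ | ∃ t, 1 ≤ t ∧ t ≤ T ∧ X t ω ∈ B k}.Finite := by
  have hsub : {k : ℕ | ∃ t, 1 ≤ t ∧ t ≤ T ∧ X t ω ∈ B k} ⊆
      ⋃ t ∈ Set.Icc 1 T, {k : ℕ | X t ω ∈ B k} := by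
    rintro k ⟨t, h1, h2, h3⟩
    exact Set.mem_biUnion ⟨h1, h2⟩ h3
  refine Set.Finite.subset (Set.Finite.biUnion (Set.finite_Icc 1 T) fun t _ => ?_) hsub
  refine Set.Subsingleton.finite fun k hk k' hk' => ?_
  by_contra hne
  exact Set.disjoint_left.mp (hdisj hne) hk hk'

lemma mem_cntEv_of_count {X : ℕ → Ω → 𝒳} {B : ℕ → Set 𝒳} (hdisj : Pairwise (Function.onFun Disjoint B))
    {T : ℕ} {ω : Ω} {c : ℝ} (h : c ≤ (distinctSetCount X B T ω : ℝ)) :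
    ω ∈ cntEv X B T c := by
  have hfin := hitSet_finite hdisj (X := X) T ω
  refine ⟨hfin.toFinset, ?_, ?_⟩
  · rwa [distinctSetCount, Set.ncard_eq_toFinset_card _ hfin] at h
  · intro k hk
    exact hfin.mem_toFinset.mp hk

lemma count_lt_of_not_mem_cntEv {X : ℕ → Ω → 𝒳} {B : ℕ → Set 𝒳}
    (hdisj : Pairwise (Function.onFun Disjoint B)) {T : ℕ} {ω : Ω} {c : ℝ}
    (h : ω ∉ cntEv X B T c) : (distinctSetCount X B T ω : ℝ) < c := by
  by_contra hc
  exact h (mem_cntEv_of_count hdisj (le_of_not_gt hc))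

lemma tailUn_iInter_empty {B : ℕ → Set 𝒳} (hdisj : Pairwise (Function.onFun Disjoint B)) :
    ⋂ N, tailUn B N = ∅ := by
  ext x
  simp only [Set.mem_iInter, Set.mem_empty_iff_false, iff_false, not_forall, tailUn,
    Set.mem_iUnion]
  by_contra h
  push_neg at h
  obtain ⟨k, _, hk⟩ := h 0
  obtain ⟨k', hk'ge, hk'⟩ := h (k + 1)
  have hne : k ≠ k' := by omega
  exact Set.disjoint_left.mp (hdisj hne) hk hk'

/-- Main capture lemma. -/
lemma capture_lemma {X : ℕ → Ω → 𝒳} {B : ℕ → Set 𝒳} (hdisj : Pairwise (Function.onFun Disjoint B))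
    {T T' M₁ M₂ : ℕ} {ε : ℝ} {ω : Ω} (hT : 0 < T) (hTT' : T ≤ T')
    (hR : ω ∈ cntEv X B T (ε * T)) (hTF : ω ∉ tfail X B T' M₂)
    (hM : ((M₁ : ℝ) + 1) ≤ ε * T / 2) {A : Set 𝒳}
    (hsub : ∀ k, M₁ < k → k ≤ M₂ → B k ⊆ A) (i : ℕ) :
    ε / 2 ≤ avgVisit X (scaleTimes X i) A T ω := by
  classical
  obtain ⟨F, hcard, hhit⟩ := hR
  -- all hit cells have index ≤ M₂
  have hbelow : ∀ k ∈ F, k ≤ M₂ := by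
    intro k hk
    by_contra hgt
    obtain ⟨t, h1, h2, h3⟩ := hhit k hk
    exact hTF (Set.mem_iUnion.mpr ⟨t, Set.mem_iUnion.mpr ⟨⟨h1, h2.trans hTT'⟩,
      Set.mem_iUnion.mpr ⟨k, Set.mem_iUnion.mpr ⟨by omega, h3⟩⟩⟩⟩)
  set F' : Finset ℕ := F.filter (fun k => M₁ < k) with hF'
  have hcard' : ε * T / 2 ≤ (F'.card : ℝ) := by
    have hsplit : F'.card + (F.filter (fun k => ¬ M₁ < k)).card = F.card := by
      rw [hF']; exact Finset.card_filter_add_card_filter_not _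
    have hle : (F.filter (fun k => ¬ M₁ < k)).card ≤ M₁ + 1 := by
      have : F.filter (fun k => ¬ M₁ < k) ⊆ Finset.range (M₁ + 1) := by
        intro k hk
        simp only [Finset.mem_filter, not_lt] at hk
        exact Finset.mem_range.mpr (by omega)
      simpa using Finset.card_le_card this
    have h1 : (F.card : ℝ) ≤ (F'.card : ℝ) + ((M₁ : ℝ) + 1) := by
      push_cast [← hsplit]
      have : ((F.filter (fun k => ¬ M₁ < k)).card : ℝ) ≤ (M₁ : ℝ) + 1 := by
        exact_mod_cast hle
      linarith
    linarith
  -- least hit times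
  have hexists : ∀ k ∈ F', ∃ t, 1 ≤ t ∧ t ≤ T ∧ X t ω ∈ B k := by
    intro k hk
    exact hhit k (Finset.mem_filter.mp hk).1
  let τ : ℕ → ℕ := fun k =>
    if h : ∃ t, 1 ≤ t ∧ t ≤ T ∧ X t ω ∈ B k then Nat.find h else 0
  have hτspec : ∀ k ∈ F', 1 ≤ τ k ∧ τ k ≤ T ∧ X (τ k) ω ∈ B k := by
    intro k hk
    have h := hexists k hk
    simp only [τ, dif_pos h]
    exact Nat.find_spec h
  have hτmin : ∀ k ∈ F', ∀ t', t' < τ k → ¬(1 ≤ t' ∧ t' ≤ T ∧ X t' ω ∈ B k) := by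
    intro k hk t' ht'
    have h := hexists k hk
    simp only [τ, dif_pos h] at ht'
    simpa only [τ, dif_pos h] using Nat.find_min h ht'
  set W : Finset ℕ := F'.image τ with hW
  have hWcard : W.card = F'.card := by
    rw [hW]
    apply Finset.card_image_of_injOn
    intro k hk k' hk' heq
    by_contra hne
    have h1 := (hτspec k hk).2.2
    have h2 := (hτspec k' hk').2.2
    rw [heq] at h1
    exact Set.disjoint_left.mp (hdisj hne) h1 h2
  have hWsub : W ⊆ Finset.Icc 1 T := by
    intro t ht
    obtain ⟨k, hk, rfl⟩ := Finset.mem_image.mp ht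
    have := hτspec k hk
    exact Finset.mem_Icc.mpr ⟨this.1, this.2.1⟩
  have hWmem : ∀ t ∈ W, t ∈ scaleTimes X i ω ∧ X t ω ∈ A := by
    intro t ht
    obtain ⟨k, hk, rfl⟩ := Finset.mem_image.mp ht
    obtain ⟨h1, h2, h3⟩ := hτspec k hk
    constructor
    · apply mem_scaleTimes_of_new h1
      intro t' ht1' ht2' heq
      have := hτmin k hk t' ht2'
      push_neg at this
      have h4 := this ht1' (le_trans (le_of_lt ht2') h2)
      rw [heq] at h4
      exact h4 h3
    · have hk' := Finset.mem_filter.mp hk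
      exact hsub k hk'.2 (hbelow k hk'.1) h3
  have := avgVisit_ge_card W hWsub hWmem
  have hfinal : ε / 2 ≤ (W.card : ℝ) / T := by
    rw [hWcard, le_div_iff₀ (by exact_mod_cast hT : (0:ℝ) < (T:ℝ))]
    calc ε / 2 * T = ε * T / 2 := by ring
      _ ≤ (F'.card : ℝ) := hcard'
  linarith

lemma tailUn_antitone (B : ℕ → Set 𝒳) : Antitone (tailUn B) := by
  intro N N' h x hx
  obtain ⟨k, hk, hxk⟩ := by simpa [tailUn] using hx
  exact Set.mem_iUnion.mpr ⟨k, Set.mem_iUnion.mpr ⟨le_trans h hk, hxk⟩⟩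

lemma tfail_tendsto_zero {P : Measure Ω} [IsProbabilityMeasure P]
    {X : ℕ → Ω → 𝒳} {B : ℕ → Set 𝒳} (hX : ∀ t, Measurable (X t))
    (hB : ∀ k, MeasurableSet (B k)) (hdisj : Pairwise (Function.onFun Disjoint B)) (T : ℕ) :
    Tendsto (fun M => P (tfail X B T M)) atTop (nhds 0) := by
  have hmB : ∀ N, MeasurableSet (tailUn B N) := fun N =>
    MeasurableSet.iUnion fun k => MeasurableSet.iUnion fun _ => hB k
  have hterm : ∀ t : ℕ, Tendsto (fun M => P (X t ⁻¹' tailUn B (M+1))) atTop (nhds 0) := by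
    intro t
    have hiI : ⋂ M, X t ⁻¹' tailUn B (M+1) = ∅ := by
      rw [← Set.preimage_iInter]
      have : ⋂ M, tailUn B (M+1) = ∅ := by
        apply Set.eq_empty_of_subset_empty
        rw [← tailUn_iInter_empty hdisj]
        exact fun x hx => Set.mem_iInter.mpr fun N =>
          tailUn_antitone B (Nat.le_succ N) (Set.mem_iInter.mp hx N)
      rw [this, Set.preimage_empty]
    have := tendsto_measure_iInter_atTop (μ := P)
      (s := fun M => X t ⁻¹' tailUn B (M+1))
      (fun M => ((hX t) (hmB (M+1))).nullMeasurableSet)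
      (fun M M' h => Set.preimage_mono (tailUn_antitone B (by omega)))
      ⟨0, measure_ne_top P _⟩
    rwa [hiI, measure_empty] at this
  have hbound : ∀ M, P (tfail X B T M) ≤
      ∑ t ∈ Finset.Icc 1 T, P (X t ⁻¹' tailUn B (M+1)) := by
    intro M
    have hsub : tfail X B T M ⊆ ⋃ t ∈ Finset.Icc 1 T, X t ⁻¹' tailUn B (M+1) := by
      intro ω hω
      simp only [tfail, Set.mem_iUnion] at hω
      obtain ⟨t, ht, hωt⟩ := hω
      exact Set.mem_biUnion (Finset.mem_Icc.mpr (by omega)) hωt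
    exact le_trans (measure_mono hsub) (measure_biUnion_finset_le _ _)
  have hsum : Tendsto (fun M => ∑ t ∈ Finset.Icc 1 T, P (X t ⁻¹' tailUn B (M+1)))
      atTop (nhds 0) := by
    have := tendsto_finset_sum (Finset.Icc 1 T) (fun t _ => hterm t)
    simpa using this
  exact tendsto_of_tendsto_of_tendsto_of_le_of_le tendsto_const_nhds hsum
    (fun M => zero_le) hbound

lemma ennreal_quarter {p a : ℝ≥0∞} (hp : p ≠ ⊤) (h : p ≤ a + p/4 + p/4) : p/2 ≤ a := by
  by_cases ha : a = ⊤
  · simp [ha]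
  have h4 : p/4 ≠ ⊤ := by
    exact (ENNReal.div_lt_top hp (by norm_num)).ne
  have htr : p.toReal ≤ a.toReal + p.toReal/4 + p.toReal/4 := by
    calc p.toReal ≤ (a + p/4 + p/4).toReal := by
          apply ENNReal.toReal_mono _ h
          exact ENNReal.add_ne_top.mpr ⟨ENNReal.add_ne_top.mpr ⟨ha, h4⟩, h4⟩
      _ = a.toReal + p.toReal/4 + p.toReal/4 := by
          rw [ENNReal.toReal_add (ENNReal.add_ne_top.mpr ⟨ha, h4⟩) h4,
            ENNReal.toReal_add ha h4, ENNReal.toReal_div]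
          norm_num
  have : (p/2).toReal ≤ a.toReal := by
    rw [ENNReal.toReal_div]
    norm_num
    linarith
  exact (ENNReal.toReal_le_toReal ((ENNReal.div_lt_top hp (by norm_num)).ne) ha).mp this

end AuxStmt3

open scoped ENNReal in
/-- condition C4 implies condition C2. -/
theorem stmt3 [TopologicalSpace 𝒳] [TopologicalSpace.SeparableSpace 𝒳]
    [TopologicalSpace.MetrizableSpace 𝒳] [BorelSpace 𝒳]
    (P : Measure Ω) [IsProbabilityMeasure P]
    (X : ℕ → Ω → 𝒳) (hX : ∀ t, Measurable (X t))
    (hC4 : SatisfiesC4 P X) :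
    SatisfiesC2 P X := by
  classical
  haveI : SecondCountableTopology 𝒳 := secondCountable_of_sep_met
  intro B hB hdisj
  by_contra hbad
  rw [MeasureTheory.ae_iff] at hbad
  -- Step 1: find ε = 1/(q+1) such that the event "εT cells seen at arbitrarily
  -- large times T" has positive probability.
  have hsubset : {ω | ¬ Tendsto (fun T => (distinctSetCount X B T ω : ℝ) / T)
      atTop (nhds 0)} ⊆ ⋃ q : ℕ, infEv X B ((q : ℝ) + 1)⁻¹ := by
    intro ω hω
    simp only [Set.mem_setOf_eq] at hω
    by_contra hnot
    simp only [Set.mem_iUnion, not_exists] at hnot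
    apply hω
    rw [tendsto_order]
    constructor
    · intro a ha
      refine Eventually.of_forall fun T => lt_of_lt_of_le ha (by positivity)
    · intro a ha
      obtain ⟨q, hq⟩ := exists_nat_one_div_lt ha
      have hq' : ((q : ℝ) + 1)⁻¹ < a := by
        rwa [one_div] at hq
      have hnq := hnot q
      simp only [infEv, Set.mem_iInter, Set.mem_iUnion, not_forall, not_exists] at hnq
      obtain ⟨n, hn⟩ := hnq
      filter_upwards [eventually_ge_atTop (max n 1)] with T hT
      have hT1 : 1 ≤ T := le_trans (le_max_right n 1) hT
      have hTn : n ≤ T := le_trans (le_max_left n 1) hT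
      have hcnt := count_lt_of_not_mem_cntEv hdisj (hn T hTn)
      have hTpos : (0 : ℝ) < T := by exact_mod_cast hT1
      calc (distinctSetCount X B T ω : ℝ) / T < ((q : ℝ) + 1)⁻¹ := by
            rw [div_lt_iff₀ hTpos]; exact hcnt
        _ < a := hq'
  obtain ⟨q, hq⟩ : ∃ q : ℕ, P (infEv X B ((q : ℝ) + 1)⁻¹) ≠ 0 := by
    by_contra h
    push_neg at h
    exact hbad (measure_mono_null hsubset (measure_iUnion_null h))
  set ε : ℝ := ((q : ℝ) + 1)⁻¹ with hεdef
  have hεpos : 0 < ε := by positivity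
  set S : Set Ω := infEv X B ε with hSdef
  have hSmeas : MeasurableSet S := measurableSet_infEv hX hB ε
  set p : ℝ≥0∞ := P S with hpdef
  have hp0 : p ≠ 0 := hq
  have hpT : p ≠ ⊤ := measure_ne_top P S
  have hp40 : 0 < p / 4 := ENNReal.div_pos hp0 (by norm_num)
  -- Step 2: window and tightness choices.
  have hwin : ∀ a : ℕ, ∀ᶠ b in atTop, P (S \ winEv X B ε a b) ≤ p / 4 := by
    intro a
    have hmono : Monotone (fun b => winEv X B ε a b) := by
      intro b b' hbb' ω hω
      simp only [winEv, Set.mem_iUnion] at hω ⊢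
      obtain ⟨T, hT, hmem⟩ := hω
      exact ⟨T, ⟨hT.1, hT.2.trans hbb'⟩, hmem⟩
    have hiI : ⋂ b, (S \ winEv X B ε a b) = ∅ := by
      rw [← Set.diff_iUnion]
      apply Set.diff_eq_empty.mpr
      intro ω hω
      have hωS : ∀ n : ℕ, ∃ T, n ≤ T ∧ ω ∈ cntEv X B T (ε * T) := by
        intro n
        have := Set.mem_iInter.mp hω n
        simp only [Set.mem_iUnion] at this
        obtain ⟨T, hT, hmem⟩ := this
        exact ⟨T, hT, hmem⟩
      obtain ⟨T, hT, hmem⟩ := hωS (a + 1)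
      exact Set.mem_iUnion.mpr ⟨T, Set.mem_iUnion.mpr ⟨T,
        Set.mem_iUnion.mpr ⟨⟨by omega, le_refl T⟩, hmem⟩⟩⟩
    have htend : Tendsto (fun b => P (S \ winEv X B ε a b)) atTop (nhds 0) := by
      have := tendsto_measure_iInter_atTop (μ := P)
        (s := fun b => S \ winEv X B ε a b)
        (fun b => (hSmeas.diff (measurableSet_winEv hX hB ε a b)).nullMeasurableSet)
        (fun b b' hbb' => Set.diff_subset_diff_right (hmono hbb'))
        ⟨0, measure_ne_top P _⟩
      rwa [hiI, measure_empty] at this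
    exact htend.eventually (eventually_le_nhds hp40)
  have htight : ∀ T : ℕ, ∀ᶠ M in atTop, P (tfail X B T M) ≤ p / 4 := fun T =>
    (tfail_tendsto_zero hX hB hdisj T).eventually (eventually_le_nhds hp40)
  -- Step 3: recursive construction of times and index boundaries.
  have hstep : ∀ s : ℕ × ℕ, ∃ s' : ℕ × ℕ, s.1 < s'.1 ∧ s.2 ≤ s'.2 ∧
      P (S \ winEv X B ε (max s.1 ⌈2 * ((s.2 : ℝ) + 1) / ε⌉₊) s'.1) ≤ p / 4 ∧
      P (tfail X B s'.1 s'.2) ≤ p / 4 := by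
    intro s
    set a := max s.1 ⌈2 * ((s.2 : ℝ) + 1) / ε⌉₊ with hadef
    obtain ⟨b, hb1, hb2⟩ := ((hwin a).and (eventually_gt_atTop a)).exists
    obtain ⟨M, hM1, hM2⟩ := ((htight b).and (eventually_ge_atTop s.2)).exists
    exact ⟨(b, M), lt_of_le_of_lt (le_max_left _ _) hb2, hM2, hb1, hM1⟩
  set seq : ℕ → ℕ × ℕ := fun j => Nat.rec (1, 0) (fun _ s => Classical.choose (hstep s)) j
    with hseqdef
  have hseqsucc : ∀ j, seq (j + 1) = Classical.choose (hstep (seq j)) := fun j => rfl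
  set Tj : ℕ → ℕ := fun j => (seq j).1 with hTjdef
  set Mj : ℕ → ℕ := fun j => (seq j).2 with hMjdef
  set aj : ℕ → ℕ := fun j => max (Tj j) ⌈2 * ((Mj j : ℝ) + 1) / ε⌉₊ with hajdef
  have hTstep : ∀ j, Tj j < Tj (j + 1) := by
    intro j
    have := Classical.choose_spec (hstep (seq j))
    rw [← hseqsucc j] at this
    exact this.1
  have hMstep : ∀ j, Mj j ≤ Mj (j + 1) := by
    intro j
    have := Classical.choose_spec (hstep (seq j))
    rw [← hseqsucc j] at this
    exact this.2.1
  have hwinj : ∀ j, P (S \ winEv X B ε (aj j) (Tj (j + 1))) ≤ p / 4 := by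
    intro j
    have := Classical.choose_spec (hstep (seq j))
    rw [← hseqsucc j] at this
    exact this.2.2.1
  have htightj : ∀ j, P (tfail X B (Tj (j + 1)) (Mj (j + 1))) ≤ p / 4 := by
    intro j
    have := Classical.choose_spec (hstep (seq j))
    rw [← hseqsucc j] at this
    exact this.2.2.2
  have hTge : ∀ j, j + 1 ≤ Tj j := by
    intro j
    induction j with
    | zero => exact le_refl 1
    | succ n ih => exact lt_of_le_of_lt ih (hTstep n)
  have hMmono : Monotone Mj := monotone_nat_of_le_succ hMstep
  -- Step 4: the events D j and their probabilities.
  set D : ℕ → Set Ω := fun j =>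
    (S ∩ winEv X B ε (aj j) (Tj (j + 1))) \ tfail X B (Tj (j + 1)) (Mj (j + 1)) with hDdef
  have hDmeas : ∀ j, MeasurableSet (D j) :=
    fun j => (hSmeas.inter (measurableSet_winEv hX hB ε _ _)).diff
      (measurableSet_tfail hX hB _ _)
  have hPD : ∀ j, p / 2 ≤ P (D j) := by
    intro j
    apply ennreal_quarter hpT
    calc p = P S := rfl
      _ ≤ P (S ∩ winEv X B ε (aj j) (Tj (j + 1))) +
          P (S \ winEv X B ε (aj j) (Tj (j + 1))) := measure_le_inter_add_diff P S _
      _ ≤ (P (D j) + P (tfail X B (Tj (j + 1)) (Mj (j + 1)))) +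
          P (S \ winEv X B ε (aj j) (Tj (j + 1))) := by
          gcongr
          calc P (S ∩ winEv X B ε (aj j) (Tj (j + 1)))
              ≤ P ((S ∩ winEv X B ε (aj j) (Tj (j + 1))) ∩
                  (tfail X B (Tj (j + 1)) (Mj (j + 1)))ᶜ ∪
                  tfail X B (Tj (j + 1)) (Mj (j + 1))) := by
                apply measure_mono
                intro ω hω
                by_cases h : ω ∈ tfail X B (Tj (j + 1)) (Mj (j + 1))
                · exact Or.inr h
                · exact Or.inl ⟨hω, h⟩
            _ ≤ P (D j) + P (tfail X B (Tj (j + 1)) (Mj (j + 1))) := measure_union_le _ _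
      _ ≤ P (D j) + p / 4 + p / 4 := by
          gcongr
          · exact htightj j
          · exact hwinj j
  -- Step 5: the disjoint sets A' m.
  set A' : ℕ → Set 𝒳 := fun m => ⋃ j, ⋃ (_ : (Nat.unpair j).1 = m),
    ⋃ k, ⋃ (_ : Mj j < k ∧ k ≤ Mj (j + 1)), B k with hA'def
  have hA'meas : ∀ m, MeasurableSet (A' m) := fun m =>
    MeasurableSet.iUnion fun j => MeasurableSet.iUnion fun _ =>
      MeasurableSet.iUnion fun k => MeasurableSet.iUnion fun _ => hB k
  have hA'disj : Pairwise (Function.onFun Disjoint A') := by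
    intro m m' hne
    simp only [Function.onFun, Set.disjoint_left]
    intro x hx hx'
    simp only [hA'def, Set.mem_iUnion] at hx hx'
    obtain ⟨j, hjm, k, hk, hxk⟩ := hx
    obtain ⟨j', hjm', k', hk', hxk'⟩ := hx'
    have hkk' : k = k' := by
      by_contra hkk
      exact Set.disjoint_left.mp (hdisj hkk) hxk hxk'
    subst hkk'
    have hjj' : j ≠ j' := fun h => hne (by rw [← hjm, ← hjm', h])
    rcases Nat.lt_or_ge j j' with h | h
    · have : Mj (j + 1) ≤ Mj j' := hMmono h
      omega
    · have hj'j : j' < j := by omega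
      have : Mj (j' + 1) ≤ Mj j := hMmono hj'j
      omega
  -- Step 6: the events G m.
  set G : ℕ → Set Ω := fun m => ⋂ N, ⋃ r, ⋃ (_ : N ≤ r), D (Nat.pair m r) with hGdef
  have hGmeas : ∀ m, MeasurableSet (G m) := fun m =>
    MeasurableSet.iInter fun N => MeasurableSet.iUnion fun r =>
      MeasurableSet.iUnion fun _ => hDmeas _
  have hPG : ∀ m, p / 2 ≤ P (G m) := by
    intro m
    have hanti : Antitone (fun N => ⋃ r, ⋃ (_ : N ≤ r), D (Nat.pair m r)) := by
      intro N N' hNN' ω hω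
      simp only [Set.mem_iUnion] at hω ⊢
      obtain ⟨r, hr, hmem⟩ := hω
      exact ⟨r, le_trans hNN' hr, hmem⟩
    have htend := tendsto_measure_iInter_atTop (μ := P)
      (s := fun N => ⋃ r, ⋃ (_ : N ≤ r), D (Nat.pair m r))
      (fun N => (MeasurableSet.iUnion fun r =>
        MeasurableSet.iUnion fun _ => hDmeas _).nullMeasurableSet)
      hanti ⟨0, measure_ne_top P _⟩
    refine ge_of_tendsto htend (Eventually.of_forall fun N => ?_)
    calc p / 2 ≤ P (D (Nat.pair m N)) := hPD _
      _ ≤ P (⋃ r, ⋃ (_ : N ≤ r), D (Nat.pair m r)) := by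
          apply measure_mono
          intro ω hω
          exact Set.mem_iUnion.mpr ⟨N, Set.mem_iUnion.mpr ⟨le_refl N, hω⟩⟩
  -- Step 7: pointwise lower bound on the limit submeasure on G m.
  have hGlow : ∀ m, ∀ ω ∈ G m, ε / 2 ≤ limitSubmeasure X (scaleTimes X m) (A' m) ω := by
    intro m ω hω
    apply limitSubmeasure_ge_of_frequently
    intro N
    have := Set.mem_iInter.mp hω N
    simp only [Set.mem_iUnion] at this
    obtain ⟨r, hrN, hmem⟩ := this
    set j : ℕ := Nat.pair m r with hjdef
    obtain ⟨hmem1, hmem2⟩ := hmem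
    obtain ⟨hmemS, hmemW⟩ := hmem1
    simp only [winEv, Set.mem_iUnion] at hmemW
    obtain ⟨T, ⟨haT, hTT⟩, hcnt⟩ := hmemW
    have hTpos : 0 < T := lt_of_le_of_lt (Nat.zero_le _) (lt_of_le_of_lt
      (le_trans (hTge j) (le_max_left _ _)) haT)
    refine ⟨T, ?_, ?_⟩
    · -- N ≤ T
      have h1 : r ≤ j := Nat.right_le_pair m r
      have h2 : j + 1 ≤ Tj j := hTge j
      have h3 : Tj j ≤ aj j := le_max_left _ _
      omega
    · -- ε/2 ≤ avgVisit
      refine capture_lemma (M₁ := Mj j) (M₂ := Mj (j+1)) (A := A' m) hdisj hTpos hTT hcnt hmem2 ?_ ?_ m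
      · -- (Mj j : ℝ) + 1 ≤ ε * T / 2
        have hceil : (⌈2 * ((Mj j : ℝ) + 1) / ε⌉₊ : ℝ) < T := by
          have : ⌈2 * ((Mj j : ℝ) + 1) / ε⌉₊ ≤ aj j := le_max_right _ _
          exact_mod_cast lt_of_le_of_lt this haT
        have hle : 2 * ((Mj j : ℝ) + 1) / ε ≤ ⌈2 * ((Mj j : ℝ) + 1) / ε⌉₊ := Nat.le_ceil _
        have h2 : 2 * ((Mj j : ℝ) + 1) / ε ≤ T := le_trans hle (le_of_lt hceil)
        rw [div_le_iff₀ hεpos] at h2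
        nlinarith
      · -- bucket is inside A' m
        intro k hk1 hk2
        intro x hx
        simp only [hA'def, Set.mem_iUnion]
        exact ⟨j, by rw [hjdef, Nat.unpair_pair], k, ⟨hk1, hk2⟩, hx⟩
  -- Step 8: lower bound on the integrals, contradiction with C4.
  set c0 : ℝ := ε / 2 * (p / 2).toReal with hc0def
  have hc0pos : 0 < c0 := by
    apply mul_pos (by positivity)
    exact ENNReal.toReal_pos (ENNReal.div_pos hp0 (by norm_num)).ne'
      ((ENNReal.div_lt_top hpT (by norm_num)).ne)
  have hint : ∀ m, c0 ≤ ∫ ω, limitSubmeasure X (scaleTimes X m) (A' m) ω ∂P := by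
    intro m
    have hmeasf := measurable_limitSubmeasure hX (hA'meas m) m
    have h1 : ε / 2 * (P (G m)).toReal ≤
        ∫ ω, limitSubmeasure X (scaleTimes X m) (A' m) ω ∂P :=
      integral_ge_of_event (integrable_limitSubmeasure hmeasf)
        (fun ω => limitSubmeasure_nonneg X _ _ ω) (hGmeas m)
        (by positivity) (hGlow m)
    refine le_trans ?_ h1
    rw [hc0def]
    apply mul_le_mul_of_nonneg_left _ (by positivity)
    exact (ENNReal.toReal_le_toReal ((ENNReal.div_lt_top hpT (by norm_num)).ne)
      (measure_ne_top P _)).mpr (hPG m)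
  have hC4' := hC4 A' hA'meas hA'disj
  have hev : ∀ᶠ m in atTop,
      (∫ ω, limitSubmeasure X (scaleTimes X m) (A' m) ω ∂P) < c0 :=
    hC4'.eventually_lt_const hc0pos
  obtain ⟨m, hm⟩ := hev.exists
  exact absurd (hint m) (not_le.mpr hm)
end
end

section
/- Let 𝒳 be a separable metrizable space with its Borel σ-algebra. Every stochastic process on 𝒳 satisfying condition C8 also satisfies condition C5. -/
open MeasureTheory Filter Set Topology

noncomputable section

variable {Ω : Type*} [MeasurableSpace Ω] {𝒳 : Type*} [MeasurableSpace 𝒳]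

set_option linter.unusedSectionVars false
set_option linter.unusedVariables false
set_option linter.unreachableTactic false
set_option linter.unusedTactic false

lemma tg_lower (i k : ℕ) : 2 ^ (k / 2 ^ i) ≤ timeGrid i k := by
  rw [timeGrid, Nat.le_floor_iff (by positivity)]
  push_cast
  nlinarith [pow_pos (by norm_num : (0:ℝ) < 2) (k / 2 ^ i),
    div_nonneg (Nat.cast_nonneg (k % 2 ^ i)) (le_of_lt (pow_pos (by norm_num : (0:ℝ) < 2) i))]

lemma tg_upper (i k : ℕ) : timeGrid i k < 2 ^ (k / 2 ^ i + 1) := by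
  rw [timeGrid, Nat.floor_lt (by positivity)]
  have hv : ((k % 2 ^ i : ℕ) : ℝ) < (2:ℝ) ^ i := by
    exact_mod_cast Nat.mod_lt k (Nat.two_pow_pos i)
  have h2 : (0:ℝ) < (2:ℝ)^i := by positivity
  have h3 : ((k % 2 ^ i : ℕ) : ℝ) / (2:ℝ)^i < 1 := (div_lt_one h2).2 hv
  push_cast
  have hp : (0:ℝ) < (2:ℝ) ^ (k / 2 ^ i) := by positivity
  calc (2:ℝ) ^ (k / 2 ^ i) * (1 + ((k % 2 ^ i : ℕ) : ℝ) / (2:ℝ)^i)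
      < (2:ℝ) ^ (k / 2 ^ i) * 2 := by nlinarith
    _ = 2 ^ (k / 2 ^ i + 1) := by ring

lemma tg_zero (i : ℕ) : timeGrid i 0 = 1 := by simp [timeGrid]

lemma tg_mono (i : ℕ) : Monotone (timeGrid i) := by
  apply monotone_nat_of_le_succ
  intro k
  have hd : 0 < 2 ^ i := Nat.two_pow_pos i
  rcases Nat.lt_or_ge (k % 2 ^ i + 1) (2 ^ i) with h | h
  · have hk := Nat.div_add_mod k (2^i)
    have hke : k + 1 = 2 ^ i * (k / 2 ^ i) + (k % 2 ^ i + 1) := by omega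
    have hdiv : (k+1) / 2^i = k / 2^i := by
      rw [hke, Nat.mul_add_div hd, Nat.div_eq_of_lt h]; omega
    have hmod : (k+1) % 2^i = k % 2^i + 1 := by
      rw [hke, Nat.mul_add_mod, Nat.mod_eq_of_lt h]
    rw [timeGrid, timeGrid, hdiv, hmod]
    apply Nat.floor_le_floor
    apply mul_le_mul_of_nonneg_left _ (by positivity)
    push_cast
    gcongr
    norm_num
  · have hm : k % 2^i = 2^i - 1 := by have := Nat.mod_lt k hd; omega
    have hk := Nat.div_add_mod k (2^i)
    have hdiv : (k+1) / 2^i = k / 2^i + 1 := by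
      have hkk : 2 ^ i * (k / 2 ^ i + 1) = 2 ^ i * (k / 2 ^ i) + 2 ^ i := by ring
      have hke : k + 1 = 2 ^ i * (k / 2 ^ i + 1) := by omega
      rw [hke, Nat.mul_div_cancel_left _ hd]
    have h1 := tg_lower i (k+1)
    rw [hdiv] at h1
    exact le_of_lt (lt_of_lt_of_le (tg_upper i k) h1)

lemma tg_exists_period (i t : ℕ) (ht : 1 ≤ t) :
    ∃ k, timeGrid i k ≤ t ∧ t < timeGrid i (k+1) := by
  have hbig : ∀ m, t < timeGrid i (2 ^ i * (Nat.log 2 t + 1) + m) := by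
    intro m
    have h1 : Nat.log 2 t + 1 ≤ (2 ^ i * (Nat.log 2 t + 1) + m) / 2 ^ i := by
      have h2 := Nat.mul_div_cancel_left (Nat.log 2 t + 1) (Nat.two_pow_pos i)
      calc Nat.log 2 t + 1 = 2 ^ i * (Nat.log 2 t + 1) / 2 ^ i := h2.symm
        _ ≤ (2 ^ i * (Nat.log 2 t + 1) + m) / 2 ^ i := Nat.div_le_div_right (Nat.le_add_right _ _)
    calc t < 2 ^ (Nat.log 2 t + 1) := Nat.lt_pow_succ_log_self (by norm_num) t
      _ ≤ 2 ^ ((2 ^ i * (Nat.log 2 t + 1) + m) / 2 ^ i) := Nat.pow_le_pow_right (by norm_num) h1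
      _ ≤ _ := tg_lower _ _
  set B := 2 ^ i * (Nat.log 2 t + 1) with hB
  set k := Nat.findGreatest (fun k => timeGrid i k ≤ t) B with hk
  have hk0 : timeGrid i 0 ≤ t := by rw [tg_zero]; exact ht
  have hkle : timeGrid i k ≤ t :=
    Nat.findGreatest_spec (P := fun k => timeGrid i k ≤ t) (Nat.zero_le B) hk0
  refine ⟨k, hkle, ?_⟩
  rcases Nat.lt_or_ge k B with h | h
  · by_contra hcon
    push_neg at hcon
    exact Nat.findGreatest_is_greatest (Nat.lt_succ_self k) (by omega) hcon
  · have h2 : t < timeGrid i (B + (k + 1 - B)) := hbig _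
    have hBk : B + (k + 1 - B) ≤ k + 1 := by omega
    exact lt_of_lt_of_le h2 (tg_mono i hBk)

lemma tg_period_unique {i t k1 k2 : ℕ} (h1 : timeGrid i k1 ≤ t ∧ t < timeGrid i (k1+1))
    (h2 : timeGrid i k2 ≤ t ∧ t < timeGrid i (k2+1)) : k1 = k2 := by
  by_contra h
  rcases Nat.lt_or_ge k1 k2 with hlt | hge
  · exact absurd (le_trans (tg_mono i (by omega : k1 + 1 ≤ k2)) h2.1) (by omega)
  · exact absurd (le_trans (tg_mono i (by omega : k2 + 1 ≤ k1)) h1.1) (by omega)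

/-- canonical period index of `t` at scale `i` -/
def periodOf (i t : ℕ) : ℕ := sInf {k | timeGrid i k ≤ t ∧ t < timeGrid i (k+1)}

lemma periodOf_spec (i t : ℕ) (ht : 1 ≤ t) :
    timeGrid i (periodOf i t) ≤ t ∧ t < timeGrid i (periodOf i t + 1) :=
  Nat.sInf_mem (tg_exists_period i t ht)

/-- canonical scale of `t` for the extended process -/
def scaleOf (X : ℕ → Ω → 𝒳) (Ti : ℕ → ℕ) (ω : Ω) (t : ℕ) : ℕ :=
  sInf {i | t ∈ scaleTimes X i ω ∧ Ti i ≤ t}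

lemma sum_two_pow (n : ℕ) : ∑ i ∈ Finset.range n, 2 ^ i = 2 ^ n - 1 := by
  induction n with
  | zero => simp
  | succ n ih =>
    rw [Finset.sum_range_succ, ih]
    have h1 : 1 ≤ 2 ^ n := Nat.one_le_two_pow
    have h2 : (2:ℕ) ^ (n+1) = 2 * 2 ^ n := by ring
    omega

open scoped Classical in
lemma value_count_bound
    (X : ℕ → Ω → 𝒳) (Ti : ℕ → ℕ) (ω : Ω) (x : 𝒳)
    (T I : ℕ) (hT1 : 1 ≤ T) (hI : ∀ i, Ti i ≤ T → i ≤ I) :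
    ((Finset.Icc (T / 2 ^ I + 1) T).filter
      (fun t => t ∈ (⋃ i, scaleTimes X i ω ∩ {t : ℕ | Ti i ≤ t}) ∧ X t ω = x)).card
    ≤ 2 ^ (I + 1) * (I + 2) := by
  set L := Nat.log 2 T with hL
  set a := T / 2 ^ I with ha
  set S := (Finset.Icc (a + 1) T).filter
      (fun t => t ∈ (⋃ i, scaleTimes X i ω ∩ {t : ℕ | Ti i ≤ t}) ∧ X t ω = x) with hS
  set Tgt := (Finset.range (I+1)).sigma
      (fun i => Finset.Ico (2 ^ i * (L - (I+1))) (2 ^ i * (L+1))) with hTgt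
  have key : ∀ t ∈ S, (t ∈ scaleTimes X (scaleOf X Ti ω t) ω ∧ Ti (scaleOf X Ti ω t) ≤ t) := by
    intro t htS
    rw [hS, Finset.mem_filter] at htS
    obtain ⟨-, htU, -⟩ := htS
    rw [Set.mem_iUnion] at htU
    obtain ⟨i, hi⟩ := htU
    exact Nat.sInf_mem (s := {i | t ∈ scaleTimes X i ω ∧ Ti i ≤ t}) ⟨i, hi.1, hi.2⟩
  have hmem : ∀ t ∈ S, 1 ≤ t ∧ a + 1 ≤ t ∧ t ≤ T := by
    intro t htS
    rw [hS, Finset.mem_filter, Finset.mem_Icc] at htS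
    exact ⟨le_trans (Nat.le_add_left 1 a) htS.1.1, htS.1.1, htS.1.2⟩
  have hcard : S.card ≤ Tgt.card := by
    apply Finset.card_le_card_of_injOn
      (fun t => (⟨scaleOf X Ti ω t, periodOf (scaleOf X Ti ω t) t⟩ : Σ _ : ℕ, ℕ))
    · -- maps to
      intro t htS
      obtain ⟨ht1, hta, htT⟩ := hmem t htS
      obtain ⟨htsc, htTi⟩ := key t htS
      set i := scaleOf X Ti ω t with hi
      have hiI : i ≤ I := hI i (le_trans htTi htT)
      set kk := periodOf i t with hkk
      obtain ⟨hk1, hk2⟩ := periodOf_spec i t ht1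
      set u := kk / 2 ^ i with hu
      have huL : u ≤ L := by
        have h1 : 2 ^ u ≤ T := le_trans (tg_lower i kk) (le_trans hk1 htT)
        exact (Nat.le_log_iff_pow_le (by norm_num) (by omega)).2 h1
      have hupper : kk < 2 ^ i * (L + 1) := by
        have h1 : kk < 2 ^ i * (u + 1) := by
          calc kk = 2 ^ i * (kk / 2 ^ i) + kk % 2 ^ i := (Nat.div_add_mod _ _).symm
            _ < 2 ^ i * (kk / 2 ^ i) + 2 ^ i :=
                Nat.add_lt_add_left (Nat.mod_lt kk (Nat.two_pow_pos i)) _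
            _ = 2 ^ i * (kk / 2 ^ i + 1) := by ring
            _ = 2 ^ i * (u + 1) := by rw [← hu]
        exact lt_of_lt_of_le h1 (Nat.mul_le_mul_left _ (by omega))
      have hlower : 2 ^ i * (L - (I + 1)) ≤ kk := by
        rcases Nat.lt_or_ge L (I + 2) with hcase | hcase
        · have h0 : L - (I+1) = 0 := by omega
          simp [h0]
        · have hIL : I ≤ L := by omega
          have hpd : (2:ℕ) ^ L / 2 ^ I = 2 ^ (L - I) := Nat.pow_div hIL (by norm_num)
          have haT : 2 ^ (L - I) ≤ a := by
            rw [ha, ← hpd]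
            have hT0 : T ≠ 0 := by omega
            exact Nat.div_le_div_right (Nat.pow_log_le_self 2 hT0)
          have h2 : t < 2 ^ (u + 2) := by
            have h3 : (kk + 1) / 2 ^ i ≤ u + 1 := by
              have h4 : kk + 1 ≤ kk + 2 ^ i := Nat.add_le_add_left Nat.one_le_two_pow kk
              have h5 := Nat.div_le_div_right (c := 2 ^ i) h4
              rwa [Nat.add_div_right _ (Nat.two_pow_pos i), ← hu] at h5
            calc t < timeGrid i (kk + 1) := hk2
              _ < 2 ^ ((kk+1) / 2 ^ i + 1) := tg_upper i (kk+1)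
              _ ≤ 2 ^ (u + 2) := Nat.pow_le_pow_right (by norm_num) (by omega)
          have h4 : 2 ^ (L - I) < 2 ^ (u + 2) :=
            lt_of_le_of_lt haT (lt_of_le_of_lt (by omega : a ≤ t - 1) (by omega))
          have h5 : L - I < u + 2 := (Nat.pow_lt_pow_iff_right (by norm_num)).1 h4
          have h6 : L - (I + 1) ≤ u := by omega
          calc 2 ^ i * (L - (I+1)) ≤ 2 ^ i * u := Nat.mul_le_mul_left _ h6
            _ ≤ kk := by rw [hu]; exact Nat.mul_div_le kk (2 ^ i)
      show (⟨i, kk⟩ : Σ _ : ℕ, ℕ) ∈ Tgt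
      rw [hTgt, Finset.mem_sigma]
      exact ⟨Finset.mem_range.2 (Nat.lt_succ_of_le hiI), Finset.mem_Ico.2 ⟨hlower, hupper⟩⟩
    · -- injective
      intro t1 ht1 t2 ht2 heq
      by_contra hne
      simp only at heq
      have hieq : scaleOf X Ti ω t1 = scaleOf X Ti ω t2 :=
        congrArg Sigma.fst heq
      have hkeq : periodOf (scaleOf X Ti ω t1) t1 = periodOf (scaleOf X Ti ω t2) t2 := by
        have := congrArg Sigma.snd heq
        exact eq_of_heq (by simpa using this)
      set i := scaleOf X Ti ω t1 with hi
      obtain ⟨hsc1, -⟩ := key t1 ht1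
      obtain ⟨hsc2, -⟩ := key t2 ht2
      rw [← hieq] at hsc2
      rw [← hieq] at hkeq
      obtain ⟨h11, -, h1T⟩ := hmem t1 ht1
      obtain ⟨h21, -, h2T⟩ := hmem t2 ht2
      obtain ⟨hp11, hp12⟩ := periodOf_spec i t1 h11
      obtain ⟨hp21, hp22⟩ := periodOf_spec i t2 h21
      rw [← hkeq] at hp21 hp22
      have hx1 : X t1 ω = x := by
        have h := Finset.mem_coe.1 ht1
        rw [hS, Finset.mem_filter] at h; exact h.2.2
      have hx2 : X t2 ω = x := by
        have h := Finset.mem_coe.1 ht2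
        rw [hS, Finset.mem_filter] at h; exact h.2.2
      rcases Nat.lt_or_ge t1 t2 with hlt | hge
      · exact hsc2.2 (periodOf i t1) hp21 hp22 t1 hp11 hlt (by rw [hx1, hx2])
      · have hlt : t2 < t1 := by omega
        exact hsc1.2 (periodOf i t1) hp11 hp12 t2 hp21 hlt (by rw [hx1, hx2])
  have hTgtcard : Tgt.card ≤ 2 ^ (I + 1) * (I + 2) := by
    rw [hTgt, Finset.card_sigma]
    calc ∑ i ∈ Finset.range (I+1), (Finset.Ico (2 ^ i * (L - (I+1))) (2 ^ i * (L+1))).card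
        = ∑ i ∈ Finset.range (I+1), (2 ^ i * (L+1) - 2 ^ i * (L - (I+1))) := by
          simp [Nat.card_Ico]
      _ ≤ ∑ i ∈ Finset.range (I+1), 2 ^ i * (I + 2) := by
          apply Finset.sum_le_sum
          intro i _
          rw [← Nat.mul_sub]
          exact Nat.mul_le_mul_left _ (by omega)
      _ = (∑ i ∈ Finset.range (I+1), 2 ^ i) * (I + 2) := by rw [Finset.sum_mul]
      _ ≤ 2 ^ (I + 1) * (I + 2) := by
          rw [sum_two_pow]
          exact Nat.mul_le_mul_right _ (Nat.sub_le _ _)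
  exact le_trans hcard hTgtcard

open scoped Classical in
lemma count_key
    (X : ℕ → Ω → 𝒳) (Ti : ℕ → ℕ) (ω : Ω) (A : Set 𝒳)
    (T I Ψb : ℕ) (hT1 : 1 ≤ T)
    (hI : ∀ i, Ti i ≤ T → i ≤ I)
    (hΨb : 2 ^ (I + 1) * (I + 2) ≤ Ψb) :
    ((Finset.Icc 1 T).filter
        (fun t => t ∈ (⋃ i, scaleTimes X i ω ∩ {t : ℕ | Ti i ≤ t}) ∧ X t ω ∈ A)).card
    ≤ T / 2 ^ I +
      ((Finset.Icc 1 T).filter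
        (fun t => X t ω ∈ A ∧ dupCount X t (X t ω) ω ≤ Ψb)).card := by
  set a := T / 2 ^ I with ha
  set p : ℕ → Prop := fun t => t ∈ (⋃ i, scaleTimes X i ω ∩ {t : ℕ | Ti i ≤ t}) ∧ X t ω ∈ A
    with hp
  set S := (Finset.Icc (a + 1) T).filter p with hS
  set S' := (Finset.Icc 1 T).filter
      (fun t => X t ω ∈ A ∧ dupCount X t (X t ω) ω ≤ Ψb) with hS'
  have step1 : ((Finset.Icc 1 T).filter p).card ≤ a + S.card := by
    have hsub : (Finset.Icc 1 T).filter p ⊆ (Finset.Icc 1 a) ∪ S := by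
      intro t ht
      rw [Finset.mem_filter, Finset.mem_Icc] at ht
      rcases le_or_gt t a with h | h
      · exact Finset.mem_union_left _ (Finset.mem_Icc.2 ⟨ht.1.1, h⟩)
      · exact Finset.mem_union_right _
          (Finset.mem_filter.2 ⟨Finset.mem_Icc.2 ⟨h, ht.1.2⟩, ht.2⟩)
    calc ((Finset.Icc 1 T).filter p).card ≤ ((Finset.Icc 1 a) ∪ S).card :=
          Finset.card_le_card hsub
      _ ≤ (Finset.Icc 1 a).card + S.card := Finset.card_union_le _ _
      _ = a + S.card := by rw [Nat.card_Icc, Nat.add_sub_cancel]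
  -- occurrence-count function
  set c : 𝒳 → ℕ → ℕ := fun x s => ((Finset.Icc 1 s).filter (fun u => X u ω = x)).card with hc
  set r : ℕ → ℕ := fun t => (S.filter (fun t' => t' ≤ t ∧ X t' ω = X t ω)).card with hr
  set φ : ℕ → ℕ := fun t => sInf {s | r t ≤ c (X t ω) s} with hφ
  have cmono : ∀ x, Monotone (c x) := by
    intro x s1 s2 h
    exact Finset.card_le_card (Finset.filter_subset_filter _ (Finset.Icc_subset_Icc_right h))
  have hSmem : ∀ t ∈ S, 1 ≤ t ∧ a + 1 ≤ t ∧ t ≤ T ∧ p t := by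
    intro t ht
    rw [hS, Finset.mem_filter, Finset.mem_Icc] at ht
    exact ⟨le_trans (Nat.le_add_left 1 a) ht.1.1, ht.1.1, ht.1.2, ht.2⟩
  have key : ∀ t ∈ S, φ t ∈ S' ∧ X (φ t) ω = X t ω ∧
      dupCount X (φ t) (X (φ t) ω) ω = r t := by
    intro t htS
    obtain ⟨ht1, hta, htT, htp⟩ := hSmem t htS
    have hr1 : 1 ≤ r t := by
      rw [hr]
      refine Finset.card_pos.2 ⟨t, Finset.mem_filter.2 ⟨htS, le_refl t, rfl⟩⟩
    have hne : t ∈ {s | r t ≤ c (X t ω) s} := by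
      have hsub : S.filter (fun t' => t' ≤ t ∧ X t' ω = X t ω) ⊆
          (Finset.Icc 1 t).filter (fun u => X u ω = X t ω) := by
        intro t' ht'
        rw [Finset.mem_filter] at ht'
        obtain ⟨h1', -, -, -⟩ := hSmem t' ht'.1
        exact Finset.mem_filter.2 ⟨Finset.mem_Icc.2 ⟨h1', ht'.2.1⟩, ht'.2.2⟩
      exact Finset.card_le_card hsub
    set m := φ t with hm
    have hmem : r t ≤ c (X t ω) m := Nat.sInf_mem (⟨t, hne⟩ : Set.Nonempty _)
    have hmle : m ≤ t := Nat.sInf_le hne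
    have hm1 : 1 ≤ m := by
      by_contra h
      push_neg at h
      interval_cases m
      have : c (X t ω) 0 = 0 := by simp [hc]
      omega
    have hmm : sInf {s | r t ≤ c (X t ω) s} = m := rfl
    have hprev : c (X t ω) (m - 1) < r t := by
      have h := Nat.notMem_of_lt_sInf (show m - 1 < sInf {s | r t ≤ c (X t ω) s} by rw [hmm]; omega)
      rw [Set.mem_setOf_eq] at h
      omega
    have hicc : Finset.Icc 1 m = insert m (Finset.Icc 1 (m - 1)) := by
      ext u
      simp only [Finset.mem_Icc, Finset.mem_insert]
      omega
    have hXm : X m ω = X t ω := by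
      by_contra hcon
      have heqc : c (X t ω) m = c (X t ω) (m - 1) := by
        simp only [hc]
        rw [hicc, Finset.filter_insert, if_neg hcon]
      omega
    have hcm : c (X t ω) m = r t := by
      have hle : c (X t ω) m ≤ c (X t ω) (m - 1) + 1 := by
        simp only [hc]
        rw [hicc, Finset.filter_insert]
        split <;> first
          | exact Finset.card_insert_le _ _
          | exact Nat.le_succ _
      omega
    have hdup : dupCount X m (X m ω) ω = c (X t ω) m := by
      simp only [dupCount, hXm]
      have hset : {s : ℕ | 1 ≤ s ∧ s ≤ m ∧ X s ω = X t ω} =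
          ↑((Finset.Icc 1 m).filter (fun u => X u ω = X t ω)) := by
        ext u
        simp [Finset.mem_Icc, and_assoc]
      rw [hset, Set.ncard_coe_finset]
    have hrΨ : r t ≤ Ψb := by
      have hsub : S.filter (fun t' => t' ≤ t ∧ X t' ω = X t ω) ⊆
          (Finset.Icc (a + 1) T).filter
            (fun t' => t' ∈ (⋃ i, scaleTimes X i ω ∩ {t : ℕ | Ti i ≤ t}) ∧ X t' ω = X t ω) := by
        intro t' ht'
        rw [Finset.mem_filter] at ht'
        obtain ⟨-, ha', hT', hp'⟩ := hSmem t' ht'.1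
        exact Finset.mem_filter.2 ⟨Finset.mem_Icc.2 ⟨ha', hT'⟩, hp'.1, ht'.2.2⟩
      calc r t ≤ _ := Finset.card_le_card hsub
        _ ≤ 2 ^ (I + 1) * (I + 2) := value_count_bound X Ti ω (X t ω) T I hT1 hI
        _ ≤ Ψb := hΨb
    refine ⟨?_, hXm, by rw [hdup, hcm]⟩
    rw [hS', Finset.mem_filter, Finset.mem_Icc]
    refine ⟨⟨hm1, le_trans hmle htT⟩, ?_, ?_⟩
    · rw [hXm]; exact htp.2
    · rw [hdup, hcm]; exact hrΨ
  have step2 : S.card ≤ S'.card := by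
    apply Finset.card_le_card_of_injOn φ
    · intro t ht; exact (key t ht).1
    · intro t1 ht1c t2 ht2c heq
      have ht1 : t1 ∈ S := Finset.mem_coe.1 ht1c
      have ht2 : t2 ∈ S := Finset.mem_coe.1 ht2c
      obtain ⟨-, hX1, hd1⟩ := key t1 ht1
      obtain ⟨-, hX2, hd2⟩ := key t2 ht2
      rw [heq] at hX1 hd1
      have hval : X t1 ω = X t2 ω := by rw [← hX1, hX2]
      have hreq : r t1 = r t2 := by
        rw [← hd1, ← hd2]
      by_contra hne
      have mono : ∀ s1 s2, s1 ∈ S → s2 ∈ S → s1 < s2 → X s1 ω = X s2 ω → r s1 < r s2 := by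
        intro s1 s2 hs1 hs2 hlt hveq
        rw [hr]
        apply Finset.card_lt_card
        constructor
        · intro u hu
          rw [Finset.mem_filter] at hu ⊢
          exact ⟨hu.1, by omega, by rw [hu.2.2, hveq]⟩
        · intro hsub
          have h2 : s2 ∈ S.filter (fun t' => t' ≤ s2 ∧ X t' ω = X s2 ω) :=
            Finset.mem_filter.2 ⟨hs2, le_refl _, rfl⟩
          have h3 := hsub h2
          rw [Finset.mem_filter] at h3
          omega
      rcases Nat.lt_or_ge t1 t2 with h | h
      · have := mono t1 t2 ht1 ht2 h hval
        omega
      · have hlt : t2 < t1 := by omega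
        have := mono t2 t1 ht2 ht1 hlt hval.symm
        omega
  calc ((Finset.Icc 1 T).filter p).card ≤ a + S.card := step1
    _ ≤ a + S'.card := by omega


open scoped Classical in
lemma sum_ind_card (B : Set ℕ) (T : ℕ) :
    ∑ t ∈ Finset.Icc 1 T, B.indicator (fun _ => (1:ℝ)) t
      = (((Finset.Icc 1 T).filter (fun t => t ∈ B)).card : ℝ) := by
  rw [← Finset.sum_boole]
  apply Finset.sum_congr rfl
  intro t _
  rw [Set.indicator_apply]

lemma frac_nonneg (B : Set ℕ) (T : ℕ) :
    0 ≤ (T : ℝ)⁻¹ * ∑ t ∈ Finset.Icc 1 T, B.indicator (fun _ => (1:ℝ)) t := by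
  apply mul_nonneg (by positivity)
  apply Finset.sum_nonneg
  intro t _
  exact Set.indicator_nonneg (fun _ _ => zero_le_one) t

lemma frac_le_one (B : Set ℕ) (T : ℕ) :
    (T : ℝ)⁻¹ * ∑ t ∈ Finset.Icc 1 T, B.indicator (fun _ => (1:ℝ)) t ≤ 1 := by
  rcases Nat.eq_zero_or_pos T with h | h
  · simp [h]
  have hsum : ∑ t ∈ Finset.Icc 1 T, B.indicator (fun _ => (1:ℝ)) t ≤ T := by
    calc ∑ t ∈ Finset.Icc 1 T, B.indicator (fun _ => (1:ℝ)) t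
        ≤ ∑ t ∈ Finset.Icc 1 T, 1 := by
          apply Finset.sum_le_sum
          intro t _
          exact Set.indicator_le_self' (fun _ _ => zero_le_one) t
      _ = ((Finset.Icc 1 T).card : ℝ) := by simp
      _ = T := by rw [Nat.card_Icc]; simp
  have hT : (0:ℝ) < T := by exact_mod_cast h
  calc (T : ℝ)⁻¹ * ∑ t ∈ Finset.Icc 1 T, B.indicator (fun _ => (1:ℝ)) t
      ≤ (T : ℝ)⁻¹ * T := by
        apply mul_le_mul_of_nonneg_left hsum (by positivity)
    _ = 1 := inv_mul_cancel₀ (ne_of_gt hT)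

open scoped Classical in
lemma avg_le (X : ℕ → Ω → 𝒳) (Ti : ℕ → ℕ) (hTi : ∀ i, i ≤ Ti i) (ω : Ω) (A : Set 𝒳)
    (T I Ψb : ℕ) (hT1 : 1 ≤ T)
    (hI : ∀ i, Ti i ≤ T → i ≤ I) (hΨb : 2 ^ (I + 1) * (I + 2) ≤ Ψb) :
    avgVisit X (fun ω => ⋃ i, scaleTimes X i ω ∩ {t : ℕ | Ti i ≤ t}) A T ω ≤
      (T : ℝ)⁻¹ * ((T / 2 ^ I : ℕ) : ℝ) +
      (T : ℝ)⁻¹ * ∑ t ∈ Finset.Icc 1 T,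
        ({s : ℕ | X s ω ∈ A ∧ dupCount X s (X s ω) ω ≤ Ψb}.indicator (fun _ => (1:ℝ)) t) := by
  rw [avgVisit, sum_ind_card, sum_ind_card, ← mul_add]
  apply mul_le_mul_of_nonneg_left _ (by positivity)
  have hkey := count_key X Ti ω A T I Ψb hT1 hI hΨb
  have hkey2 : (((Finset.Icc 1 T).filter
        (fun t => t ∈ (⋃ i, scaleTimes X i ω ∩ {t : ℕ | Ti i ≤ t}) ∧ X t ω ∈ A)).card : ℝ)
      ≤ ((T / 2 ^ I : ℕ) : ℝ) +
        (((Finset.Icc 1 T).filter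
          (fun t => X t ω ∈ A ∧ dupCount X t (X t ω) ω ≤ Ψb)).card : ℝ) := by
    push_cast
    exact_mod_cast hkey
  have hfc : ∀ (q : ℕ → Prop) (i1 : DecidablePred q) (i2 : DecidablePred q),
      @Finset.filter ℕ q i1 (Finset.Icc 1 T) = @Finset.filter ℕ q i2 (Finset.Icc 1 T) := by
    intro q i1 i2
    exact Finset.filter_congr_decidable _ _ _
  simp only [Set.mem_setOf_eq, Set.mem_iUnion, Set.mem_inter_iff]
  simp only [Set.mem_setOf_eq, Set.mem_iUnion, Set.mem_inter_iff] at hkey2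
  convert hkey2 using 6

lemma dup_measurable [TopologicalSpace 𝒳] [TopologicalSpace.SeparableSpace 𝒳]
    [TopologicalSpace.MetrizableSpace 𝒳] [BorelSpace 𝒳]
    (X : ℕ → Ω → 𝒳) (hX : ∀ t, Measurable (X t)) (t : ℕ) :
    Measurable (fun ω => dupCount X t (X t ω) ω) := by
  classical
  letI := TopologicalSpace.metrizableSpaceMetric 𝒳
  haveI : SecondCountableTopology 𝒳 := UniformSpace.secondCountable_of_separable 𝒳
  have heq : (fun ω => dupCount X t (X t ω) ω) =
      fun ω => ∑ s ∈ Finset.Icc 1 t, if X s ω = X t ω then 1 else 0 := by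
    funext ω
    rw [dupCount]
    have hset : {s : ℕ | 1 ≤ s ∧ s ≤ t ∧ X s ω = X t ω} =
        ↑((Finset.Icc 1 t).filter (fun s => X s ω = X t ω)) := by
      ext u; simp [Finset.mem_Icc, and_assoc]
    rw [hset, Set.ncard_coe_finset, Finset.card_filter]
  rw [heq]
  apply Finset.measurable_sum
  intro s _
  have hms : MeasurableSet {ω | X s ω = X t ω} :=
    (hX s).stronglyMeasurable.measurableSet_eq_fun (hX t).stronglyMeasurable
  exact Measurable.ite hms measurable_const measurable_const

/-- condition C8 implies condition C5. -/
theorem stmt6 [TopologicalSpace 𝒳] [TopologicalSpace.SeparableSpace 𝒳]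
    [TopologicalSpace.MetrizableSpace 𝒳] [BorelSpace 𝒳]
    (P : Measure Ω) [IsProbabilityMeasure P]
    (X : ℕ → Ω → 𝒳) (hX : ∀ t, Measurable (X t))
    (hC8 : SatisfiesC8 P X) :
    SatisfiesC5 P X := by
  classical
  obtain ⟨Ψ, hΨmono, hΨtop, hC8'⟩ := hC8
  have hex : ∀ i : ℕ, ∃ T, 2 ^ (i+1) * (i+2) ≤ Ψ T :=
    fun i => (hΨtop.eventually_ge_atTop _).exists
  set N : ℕ → ℕ := fun i => Nat.find (hex i) with hN
  have hNspec : ∀ i, 2 ^ (i+1) * (i+2) ≤ Ψ (N i) := fun i => Nat.find_spec (hex i)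
  have hNmono : Monotone N := by
    intro i j hij
    apply Nat.find_min' (hex i)
    calc 2 ^ (i+1) * (i+2) ≤ 2 ^ (j+1) * (j+2) :=
          Nat.mul_le_mul (Nat.pow_le_pow_right (by norm_num) (by omega)) (by omega)
      _ ≤ Ψ (N j) := hNspec j
  set Ti : ℕ → ℕ := fun i => max i (N i) with hTidef
  have hTimono : Monotone Ti := fun i j hij => max_le_max hij (hNmono hij)
  have hTi : ∀ i, i ≤ Ti i := fun i => le_max_left _ _
  have hΨTi : ∀ i, 2 ^ (i+1) * (i+2) ≤ Ψ (Ti i) :=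
    fun i => le_trans (hNspec i) (hΨmono (le_max_right _ _))
  refine ⟨Ti, hTimono, ?_⟩
  intro A hAmeas hAanti hAempty
  have hC8app := hC8' A hAmeas hAanti hAempty
  set G : ℕ → Ω → ℝ := fun i ω => Filter.limsup (fun T : ℕ => (T : ℝ)⁻¹ *
      ∑ t ∈ Finset.Icc 1 T,
        ({s : ℕ | X s ω ∈ A i ∧ dupCount X s (X s ω) ω ≤ Ψ T}.indicator
          (fun _ => (1 : ℝ)) t)) Filter.atTop with hG
  have hC8G : Tendsto (fun k => ∫ ω, G k ω ∂P) atTop (nhds 0) := by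
    rw [hG]; exact hC8app
  -- the scale cutoff function
  set If : ℕ → ℕ := fun T => Nat.findGreatest (fun i => Ti i ≤ T) T with hIf
  have hIfge : ∀ i T, Ti i ≤ T → i ≤ If T := by
    intro i T hiT
    exact Nat.le_findGreatest (le_trans (hTi i) hiT) hiT
  set e : ℕ → ℝ := fun T => (T : ℝ)⁻¹ * ((T / 2 ^ (If T) : ℕ) : ℝ) with he
  have he_nonneg : ∀ T, 0 ≤ e T := by
    intro T
    exact mul_nonneg (by positivity) (Nat.cast_nonneg _)
  have hIftop : Tendsto If atTop atTop := by
    apply tendsto_atTop.2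
    intro b
    filter_upwards [eventually_ge_atTop (Ti b)] with T hT
    exact hIfge b T hT
  have he0 : Tendsto e atTop (nhds 0) := by
    apply squeeze_zero' (Eventually.of_forall he_nonneg)
      (g := fun T => ((1:ℝ)/2) ^ (If T))
    · filter_upwards [eventually_ge_atTop 1] with T hT
      have hT0 : (0:ℝ) < T := by exact_mod_cast hT
      have h1 : ((T / 2 ^ (If T) : ℕ) : ℝ) ≤ (T : ℝ) / ((2:ℝ) ^ (If T)) := by
        have := Nat.cast_div_le (α := ℝ) (m := T) (n := 2 ^ (If T))
        rwa [Nat.cast_pow, Nat.cast_ofNat] at this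
      calc e T ≤ (T : ℝ)⁻¹ * ((T : ℝ) / ((2:ℝ) ^ (If T))) := by
            rw [he]
            exact mul_le_mul_of_nonneg_left h1 (by positivity)
        _ = ((1:ℝ)/2) ^ (If T) := by
            field_simp
            rw [← mul_pow]; norm_num
    · exact (tendsto_pow_atTop_nhds_zero_of_lt_one (by norm_num) (by norm_num)).comp hIftop
  -- pointwise bound on limit submeasures
  set 𝒯 : Ω → Set ℕ := fun ω => ⋃ i, scaleTimes X i ω ∩ {t : ℕ | Ti i ≤ t} with h𝒯
  have hbdd_avg : ∀ k ω, IsBoundedUnder (· ≤ ·) atTop (fun T => avgVisit X 𝒯 (A k) T ω) :=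
    fun k ω => isBoundedUnder_of ⟨1, fun T => frac_le_one _ _⟩
  have hcob_avg : ∀ k ω, IsCoboundedUnder (· ≤ ·) atTop (fun T => avgVisit X 𝒯 (A k) T ω) :=
    fun k ω => (isBoundedUnder_of (r := (· ≥ ·)) ⟨0, fun T => frac_nonneg _ _⟩).isCoboundedUnder_le
  have hbdd_h : ∀ k ω, IsBoundedUnder (· ≤ ·) atTop (fun T : ℕ => (T : ℝ)⁻¹ *
      ∑ t ∈ Finset.Icc 1 T,
        ({s : ℕ | X s ω ∈ A k ∧ dupCount X s (X s ω) ω ≤ Ψ T}.indicator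
          (fun _ => (1 : ℝ)) t)) :=
    fun k ω => isBoundedUnder_of ⟨1, fun T => frac_le_one _ _⟩
  have hcob_h : ∀ k ω, IsCoboundedUnder (· ≤ ·) atTop (fun T : ℕ => (T : ℝ)⁻¹ *
      ∑ t ∈ Finset.Icc 1 T,
        ({s : ℕ | X s ω ∈ A k ∧ dupCount X s (X s ω) ω ≤ Ψ T}.indicator
          (fun _ => (1 : ℝ)) t)) :=
    fun k ω => (isBoundedUnder_of (r := (· ≥ ·)) ⟨0, fun T => frac_nonneg _ _⟩).isCoboundedUnder_le
  have hls_nonneg : ∀ k ω, 0 ≤ limitSubmeasure X 𝒯 (A k) ω := by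
    intro k ω
    rw [limitSubmeasure]
    exact le_limsup_of_frequently_le
      ((Eventually.of_forall (fun T => frac_nonneg _ T)).frequently) (hbdd_avg k ω)
  have hG_le_one : ∀ k ω, G k ω ≤ 1 := by
    intro k ω
    rw [hG]
    exact limsup_le_of_le (hcob_h k ω)
      (Eventually.of_forall (fun T => frac_le_one _ T))
  have hG_nonneg : ∀ k ω, 0 ≤ G k ω := by
    intro k ω
    rw [hG]
    exact le_limsup_of_frequently_le
      ((Eventually.of_forall (fun T => frac_nonneg _ T)).frequently) (hbdd_h k ω)
  have hpt : ∀ k ω, limitSubmeasure X 𝒯 (A k) ω ≤ G k ω := by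
    intro k ω
    rw [limitSubmeasure]
    apply le_of_forall_pos_le_add
    intro δ hδ
    have hlim : Filter.limsup (fun T : ℕ => (T : ℝ)⁻¹ *
        ∑ t ∈ Finset.Icc 1 T,
          ({s : ℕ | X s ω ∈ A k ∧ dupCount X s (X s ω) ω ≤ Ψ T}.indicator
            (fun _ => (1 : ℝ)) t)) Filter.atTop < G k ω + δ/2 := by
      rw [hG]
      linarith
    have h1 := eventually_lt_of_limsup_lt hlim (hbdd_h k ω)
    have h2 : ∀ᶠ T in atTop, e T < δ/2 := he0.eventually_lt_const (by linarith)
    have h3 : ∀ᶠ T in atTop, Ti 0 ≤ T := eventually_ge_atTop (Ti 0)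
    have h4 : ∀ᶠ T in atTop, 1 ≤ T := eventually_ge_atTop 1
    apply limsup_le_of_le (hcob_avg k ω)
    filter_upwards [h1, h2, h3, h4] with T h1 h2 h3 h4
    have hΨT : 2 ^ (If T + 1) * (If T + 2) ≤ Ψ T := by
      have hw : Ti (If T) ≤ T :=
        Nat.findGreatest_spec (P := fun i => Ti i ≤ T) (Nat.zero_le T) h3
      exact le_trans (hΨTi (If T)) (hΨmono hw)
    have havg := avg_le X Ti hTi ω (A k) T (If T) (Ψ T) h4
      (fun i hi => hIfge i T hi) hΨT
    calc avgVisit X 𝒯 (A k) T ω ≤ e T + _ := havg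
      _ ≤ G k ω + δ := by linarith
  -- measurability and integrability
  have hGmeas : ∀ k, Measurable (G k) := by
    intro k
    rw [hG]
    apply Measurable.limsup
    intro T
    apply Measurable.const_mul
    apply Finset.measurable_sum
    intro t _
    have heq : (fun ω => ({s : ℕ | X s ω ∈ A k ∧ dupCount X s (X s ω) ω ≤ Ψ T}.indicator
        (fun _ => (1 : ℝ)) t)) =
        fun ω => ({ω' | X t ω' ∈ A k ∧ dupCount X t (X t ω') ω' ≤ Ψ T}.indicator
          (fun _ => (1 : ℝ)) ω) := by
      funext ω
      simp [Set.indicator_apply]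
    rw [heq]
    apply Measurable.indicator measurable_const
    exact (hX t (hAmeas k)).inter
      ((dup_measurable X hX t) measurableSet_Iic)
  have hGint : ∀ k, Integrable (G k) P := by
    intro k
    apply Integrable.mono' (integrable_const (1:ℝ)) (hGmeas k).aestronglyMeasurable
    apply ae_of_all
    intro ω
    rw [Real.norm_eq_abs, abs_le]
    exact ⟨by linarith [hG_nonneg k ω], hG_le_one k ω⟩
  -- squeeze
  apply squeeze_zero (fun k => integral_nonneg (hls_nonneg k))
    (fun k => integral_mono_of_nonneg (ae_of_all _ (hls_nonneg k)) (hGint k)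
      (ae_of_all _ (hpt k)))
    hC8G
end
end
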